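/- Let g be a finite-dimensional semisimple Lie algebra over C with a good Z-grading g = ⊕_{j∈Z} g_j for e ∈ g_2 (i.e., ad(e): g_j → g_{j+2} injective for j ≤ -1 and surjective for j ≥ -1). Then dim g_e = dim g_0 + dim g_1, where g_e is the centralizer of e. -/

import Mathlib

/-- For a good ℤ-grading of a finite-dimensional semisimple complex Lie
algebra for `e ∈ g₂`, the centralizer `g_e` satisfies
`dim g_e = dim g₀ + dim g₁`. -/
theorem finrank_centralizer_good_grading
    (L : Type*) [LieRing L] [LieAlgebra ℂ L]
    [Module.Finite ℂ L] [LieAlgebra.IsSemisimple ℂ L]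
    (V : ℤ → Submodule ℂ L)
    (hdecomp : DirectSum.IsInternal V)
    (hbracket : ∀ i j : ℤ, ∀ x ∈ V i, ∀ y ∈ V j, ⁅x, y⁆ ∈ V (i + j))
    (e : L) (he : e ∈ V 2)
    (hinj : ∀ j : ℤ, j ≤ -1 → ∀ x ∈ V j, ⁅e, x⁆ = 0 → x = 0)
    (hsurj : ∀ j : ℤ, -1 ≤ j → ∀ y ∈ V (j + 2), ∃ x ∈ V j, ⁅e, x⁆ = y) :
    Module.finrank ℂ (LinearMap.ker (LieAlgebra.ad ℂ L e)) =
      Module.finrank ℂ (V 0) + Module.finrank ℂ (V 1) := by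
  classical
  -- ad e maps V j into V (2 + j)
  have hV2 : ∀ (j : ℤ) (x : L), x ∈ V j → ⁅e, x⁆ ∈ V (2 + j) :=
    fun j x hx => hbracket 2 j e he x hx
  set P : Submodule ℂ L := ⨆ j : {j : ℤ // -1 ≤ j}, V j with hP
  set S : Submodule ℂ L := ⨆ j : {j : ℤ // 1 ≤ j}, V j with hS
  have ind := hdecomp.submodule_iSupIndep
  -- kernel is contained in P
  have hker : ∀ x : L, ⁅e, x⁆ = 0 → x ∈ P := by
    intro x hx
    have hx_top : x ∈ ⨆ j, V j := by
      rw [hdecomp.submodule_iSup_eq_top]; trivial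
    obtain ⟨c, hc⟩ := (Submodule.mem_iSup_iff_exists_dfinsupp' V x).mp hx_top
    set d : Π₀ j : ℤ, V j :=
      ∑ j ∈ c.support, DFinsupp.single (2 + j) (⟨⁅e, (c j : L)⁆, hV2 j _ (c j).2⟩ : V (2 + j))
        with hd
    have hsum : (DFinsupp.lsum ℕ fun i => (V i).subtype) d = 0 := by
      rw [hd, map_sum]
      simp only [DFinsupp.lsum_single, Submodule.coe_subtype]
      have hms : ∑ j ∈ c.support, ⁅e, (c j : L)⁆
          = ⁅e, ∑ j ∈ c.support, (c j : L)⁆ := by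
        simpa only [LieAlgebra.ad_apply] using
          (map_sum (LieAlgebra.ad ℂ L e) (fun j => (c j : L)) c.support).symm
      have hcx : ∑ j ∈ c.support, (c j : L) = x := hc
      rw [hms, hcx, hx]
    have hd0 : d = 0 :=
      ind.dfinsupp_lsum_injective (by rw [hsum, map_zero])
    have hcomp : ∀ j ∈ c.support, (-1 : ℤ) ≤ j := by
      intro j hj
      by_contra hneg
      have hj1 : j ≤ -1 := by omega
      have hdj : d (2 + j) = 0 := by rw [hd0]; rfl
      rw [hd, DFinsupp.finset_sum_apply] at hdj
      have hone : ∀ i ∈ c.support, i ≠ j →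
          (DFinsupp.single (β := fun k => ↥(V k)) (2 + i) (⟨⁅e, (c i : L)⁆, hV2 i _ (c i).2⟩ : V (2 + i))) (2 + j)
            = (0 : V (2 + j)) := by
        intro i _ hne
        exact DFinsupp.single_eq_of_ne (by omega)
      rw [Finset.sum_eq_single_of_mem j hj hone, DFinsupp.single_eq_same] at hdj
      have : ⁅e, (c j : L)⁆ = 0 := congrArg Subtype.val hdj
      have : (c j : L) = 0 := hinj j hj1 _ (c j).2 this
      exact (DFinsupp.mem_support_iff.mp hj) (by ext; exact this)
    rw [← hc]
    exact Submodule.sum_mem _ fun j hj =>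
      Submodule.mem_iSup_of_mem (⟨j, hcomp j hj⟩ : {j : ℤ // -1 ≤ j}) (c j).2
  -- ad e maps P into S
  have hmapS : ∀ (k : ℤ), 1 ≤ k → V k ≤ S :=
    fun k hk => le_iSup (fun j : {j : ℤ // 1 ≤ j} => V (j : ℤ)) ⟨k, hk⟩
  have hmap : ∀ x ∈ P, (LieAlgebra.ad ℂ L e) x ∈ S := by
    intro x hx
    simp only [LieAlgebra.ad_apply]
    refine Submodule.iSup_induction (motive := fun x => ⁅e, x⁆ ∈ S) _ hx ?_ ?_ ?_
    · rintro ⟨j, hj⟩ y hy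
      exact hmapS (2 + j) (by omega) (hV2 j y hy)
    · simp
    · intro a b ha hb
      rw [lie_add]; exact add_mem ha hb
  set g : P →ₗ[ℂ] S := (LieAlgebra.ad ℂ L e).restrict hmap with hg
  -- g is surjective
  have hgsurj : Function.Surjective g := by
    rintro ⟨y, hy⟩
    have : ∃ x ∈ P, ⁅e, x⁆ = y := by
      refine Submodule.iSup_induction (motive := fun y => ∃ x ∈ P, ⁅e, x⁆ = y) _ hy ?_ ?_ ?_
      · rintro ⟨k, hk⟩ y hy
        have hy' : y ∈ V ((k - 2) + 2) := by rwa [show k - 2 + 2 = k by omega]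
        obtain ⟨x, hx, hxy⟩ := hsurj (k - 2) (by omega) y hy'
        exact ⟨x, Submodule.mem_iSup_of_mem (⟨k - 2, by omega⟩ : {j : ℤ // -1 ≤ j}) hx, hxy⟩
      · exact ⟨0, zero_mem _, lie_zero e⟩
      · rintro a b ⟨x₁, hx₁, h₁⟩ ⟨x₂, hx₂, h₂⟩
        exact ⟨x₁ + x₂, add_mem hx₁ hx₂, by rw [lie_add, h₁, h₂]⟩
    obtain ⟨x, hxP, hxy⟩ := this
    exact ⟨⟨x, hxP⟩, Subtype.ext (by simpa [hg, LinearMap.restrict_apply] using hxy)⟩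
  -- kernel of g
  have hkerg : LinearMap.ker g = (LinearMap.ker (LieAlgebra.ad ℂ L e)).comap P.subtype := by
    ext x
    simp [hg, LinearMap.mem_ker, LinearMap.restrict_apply, Subtype.ext_iff]
  have hkerle : LinearMap.ker (LieAlgebra.ad ℂ L e) ≤ P := by
    intro x hx
    exact hker x (by simpa [LieAlgebra.ad_apply] using hx)
  have hkerrank : Module.finrank ℂ (LinearMap.ker g)
      = Module.finrank ℂ (LinearMap.ker (LieAlgebra.ad ℂ L e)) := by
    rw [hkerg]
    exact LinearEquiv.finrank_eq (Submodule.comapSubtypeEquivOfLe hkerle)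
  have hrn : Module.finrank ℂ S + Module.finrank ℂ (LinearMap.ker (LieAlgebra.ad ℂ L e))
      = Module.finrank ℂ P := by
    have := LinearMap.finrank_range_add_finrank_ker g
    rwa [LinearMap.range_eq_top.mpr hgsurj, finrank_top, hkerrank] at this
  -- P = V (-1) ⊔ (V 0 ⊔ S)
  have hPsplit : P = V (-1) ⊔ (V 0 ⊔ S) := by
    apply le_antisymm
    · refine iSup_le ?_
      rintro ⟨j, hj⟩
      rcases show j = -1 ∨ j = 0 ∨ 1 ≤ j by omega with h | h | h
      · subst h; exact le_sup_left
      · subst h; exact le_sup_of_le_right le_sup_left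
      · exact le_sup_of_le_right (le_sup_of_le_right (hmapS j h))
    · refine sup_le ?_ (sup_le ?_ (iSup_le ?_))
      · exact le_iSup (fun j : {j : ℤ // -1 ≤ j} => V (j : ℤ)) ⟨-1, le_refl _⟩
      · exact le_iSup (fun j : {j : ℤ // -1 ≤ j} => V (j : ℤ)) ⟨0, by omega⟩
      · rintro ⟨k, hk⟩
        exact le_iSup (fun j : {j : ℤ // -1 ≤ j} => V (j : ℤ)) ⟨k, by omega⟩
  have hSle : ∀ (i : ℤ) (s : Set ℤ), i ∉ s → S ≤ ⨆ j ∈ s, V j → True := fun _ _ _ _ => trivial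
  -- disjointness facts
  have hdisj2 : Disjoint (V 0) S := by
    refine Disjoint.mono_right ?_ (ind.disjoint_biSup (x := 0) (y := {j : ℤ | 1 ≤ j})
      (by simp))
    refine iSup_le ?_
    rintro ⟨k, hk⟩
    exact le_biSup _ hk
  have hdisj1 : Disjoint (V (-1)) (V 0 ⊔ S) := by
    refine Disjoint.mono_right ?_ (ind.disjoint_biSup (x := -1) (y := {j : ℤ | 0 ≤ j})
      (by simp))
    refine sup_le (le_biSup _ (by simp)) (iSup_le ?_)
    rintro ⟨k, hk⟩
    exact le_biSup _ (by simp; omega)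
  have hfr2 : Module.finrank ℂ (V 0 ⊔ S : Submodule ℂ L)
      = Module.finrank ℂ (V 0) + Module.finrank ℂ S := by
    have := Submodule.finrank_sup_add_finrank_inf_eq (V 0) S
    rw [hdisj2.eq_bot, finrank_bot] at this
    omega
  have hfrP : Module.finrank ℂ P
      = Module.finrank ℂ (V (-1)) + Module.finrank ℂ (V 0) + Module.finrank ℂ S := by
    have := Submodule.finrank_sup_add_finrank_inf_eq (V (-1)) (V 0 ⊔ S)
    rw [hdisj1.eq_bot, finrank_bot] at this
    rw [hPsplit]
    omega
  -- finrank (V (-1)) = finrank (V 1)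
  have hm1 : Module.finrank ℂ (V (-1)) = Module.finrank ℂ (V 1) := by
    have hmap1 : ∀ x ∈ V (-1), (LieAlgebra.ad ℂ L e) x ∈ V 1 := by
      intro x hx
      simpa [LieAlgebra.ad_apply] using hV2 (-1) x hx
    set g1 : V (-1) →ₗ[ℂ] V 1 := (LieAlgebra.ad ℂ L e).restrict hmap1 with hg1
    have hbij : Function.Bijective g1 := by
      constructor
      · intro a b hab
        have : ⁅e, (a : L) - b⁆ = 0 := by
          have : ⁅e, (a : L)⁆ = ⁅e, (b : L)⁆ := by
            have := congrArg Subtype.val hab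
            simpa [hg1, LinearMap.restrict_apply, LieAlgebra.ad_apply] using this
          rw [lie_sub, this, sub_self]
        have h3 := hinj (-1) (le_refl _) _ (sub_mem a.2 b.2) this
        exact Subtype.ext (sub_eq_zero.mp h3)
      · rintro ⟨y, hy⟩
        obtain ⟨x, hx, hxy⟩ := hsurj (-1) (le_refl _) y (by rwa [show (-1 : ℤ) + 2 = 1 by norm_num])
        exact ⟨⟨x, hx⟩, Subtype.ext (by simpa [hg1, LinearMap.restrict_apply] using hxy)⟩
    exact LinearEquiv.finrank_eq (LinearEquiv.ofBijective g1 hbij)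
  omega
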